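/- For all n ≥ 1 and real numbers 0 < t_1 < t_2 < t_3 < 1, the function G_n(t_1,t_2,t_3) = t_1^n t_2^n t_3^n/(n!)^3 + (2/(n!(2n)!)) ∑_{i=0}^{n-1} (-1)^{n-i} C(2n,i) [t_1^n t_2^{2n-i} t_3^i - t_1^{2n-i} t_2^n t_3^i + t_1^{2n-i} t_2^i t_3^n] satisfies the integral recurrence G_{n+1}(t_1,t_2,t_3) = ∫∫∫_{0<x<t_1, t_1<y<t_2, t_2<z<t_3} G_n(x,y,z) dx dy dz. -/

import Mathlib

open intervalIntegral in
lemma integral_canon (mm k : ℕ) (c : ℝ) (d₁ d₂ d₃ : ℕ → ℝ) (e₁ e₂ e₃ : ℕ → ℕ) (a b : ℝ) :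
    (∫ x in a..b, (c * x ^ k + ∑ i ∈ Finset.range mm,
      (d₁ i * x ^ e₁ i + d₂ i * x ^ e₂ i + d₃ i * x ^ e₃ i))) =
    c * ((b ^ (k+1) - a ^ (k+1)) / (k+1)) + ∑ i ∈ Finset.range mm,
      (d₁ i * ((b ^ (e₁ i+1) - a ^ (e₁ i+1)) / (e₁ i+1))
       + d₂ i * ((b ^ (e₂ i+1) - a ^ (e₂ i+1)) / (e₂ i+1))
       + d₃ i * ((b ^ (e₃ i+1) - a ^ (e₃ i+1)) / (e₃ i+1))) := by
  have hii : ∀ (c : ℝ) (k : ℕ), IntervalIntegrable (fun x : ℝ => c * x ^ k) MeasureTheory.volume a b :=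
    fun c k => (continuous_const.mul (continuous_pow k)).intervalIntegrable a b
  have hsum : IntervalIntegrable (fun x : ℝ => ∑ i ∈ Finset.range mm,
      (d₁ i * x ^ e₁ i + d₂ i * x ^ e₂ i + d₃ i * x ^ e₃ i)) MeasureTheory.volume a b := by
    apply Continuous.intervalIntegrable
    exact continuous_finset_sum _ fun i _ => by fun_prop
  have h1 : ∀ (c : ℝ) (k : ℕ), (∫ x in a..b, c * x ^ k) = c * ((b ^ (k+1) - a ^ (k+1)) / (k+1)) := by
    intro c k; rw [integral_const_mul, integral_pow]
  rw [integral_add (hii c k) hsum, h1,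
    integral_finset_sum (fun i _ => ((hii _ _).add (hii _ _)).add (hii _ _))]
  refine congrArg₂ (· + ·) rfl (Finset.sum_congr rfl fun i _ => ?_)
  rw [integral_add ((hii _ _).add (hii _ _)) (hii _ _), integral_add (hii _ _) (hii _ _), h1, h1, h1]

noncomputable def G (n : ℕ) (t₁ t₂ t₃ : ℝ) : ℝ :=
  t₁ ^ n * t₂ ^ n * t₃ ^ n / ((n.factorial : ℝ)) ^ 3 +
    2 / ((n.factorial : ℝ) * ((2 * n).factorial : ℝ)) *
      ∑ i ∈ Finset.range n, (-1 : ℝ) ^ (n - i) * ((2 * n).choose i) *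
        (t₁ ^ n * t₂ ^ (2 * n - i) * t₃ ^ i - t₁ ^ (2 * n - i) * t₂ ^ n * t₃ ^ i +
          t₁ ^ (2 * n - i) * t₂ ^ i * t₃ ^ n)

noncomputable def F1 (n : ℕ) (t₁ y z : ℝ) : ℝ :=
  y ^ n * z ^ n / (n.factorial : ℝ) ^ 3 * (t₁ ^ (n+1) / (n+1)) +
  2 / ((n.factorial : ℝ) * ((2*n).factorial : ℝ)) *
    ∑ i ∈ Finset.range n, (-1:ℝ)^(n-i) * ((2*n).choose i) *
      (y ^ (2*n-i) * z ^ i * (t₁^(n+1)/(n+1))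
       - y ^ n * z ^ i * (t₁^(2*n-i+1)/(((2*n-i : ℕ) : ℝ) + 1))
       + y ^ i * z ^ n * (t₁^(2*n-i+1)/(((2*n-i : ℕ) : ℝ) + 1)))

noncomputable def F2 (n : ℕ) (t₁ t₂ z : ℝ) : ℝ :=
  z ^ n / (n.factorial : ℝ) ^ 3 * (t₁ ^ (n+1) / (n+1)) * ((t₂^(n+1) - t₁^(n+1))/(n+1)) +
  2 / ((n.factorial : ℝ) * ((2*n).factorial : ℝ)) *
    ∑ i ∈ Finset.range n, (-1:ℝ)^(n-i) * ((2*n).choose i) *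
      (z ^ i * (t₁^(n+1)/(n+1)) * ((t₂^(2*n-i+1) - t₁^(2*n-i+1))/(((2*n-i : ℕ) : ℝ) + 1))
       - z ^ i * (t₁^(2*n-i+1)/(((2*n-i : ℕ) : ℝ) + 1)) * ((t₂^(n+1) - t₁^(n+1))/(n+1))
       + z ^ n * (t₁^(2*n-i+1)/(((2*n-i : ℕ) : ℝ) + 1)) * ((t₂^(i+1) - t₁^(i+1))/((i : ℝ) + 1)))

noncomputable def F3 (n : ℕ) (t₁ t₂ t₃ : ℝ) : ℝ :=
  (t₁ ^ (n+1) / (n+1)) * ((t₂^(n+1) - t₁^(n+1))/(n+1)) * ((t₃^(n+1) - t₂^(n+1))/(n+1)) / (n.factorial : ℝ) ^ 3 +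
  2 / ((n.factorial : ℝ) * ((2*n).factorial : ℝ)) *
    ∑ i ∈ Finset.range n, (-1:ℝ)^(n-i) * ((2*n).choose i) *
      ((t₁^(n+1)/(n+1)) * ((t₂^(2*n-i+1) - t₁^(2*n-i+1))/(((2*n-i : ℕ) : ℝ) + 1)) * ((t₃^(i+1) - t₂^(i+1))/((i : ℝ) + 1))
       - (t₁^(2*n-i+1)/(((2*n-i : ℕ) : ℝ) + 1)) * ((t₂^(n+1) - t₁^(n+1))/(n+1)) * ((t₃^(i+1) - t₂^(i+1))/((i : ℝ) + 1))
       + (t₁^(2*n-i+1)/(((2*n-i : ℕ) : ℝ) + 1)) * ((t₂^(i+1) - t₁^(i+1))/((i : ℝ) + 1)) * ((t₃^(n+1) - t₂^(n+1))/(n+1)))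

lemma step1 (n : ℕ) (t₁ y z : ℝ) : (∫ x in (0:ℝ)..t₁, G n x y z) = F1 n t₁ y z := by
  have h : (∫ x in (0:ℝ)..t₁, G n x y z)
      = ∫ x in (0:ℝ)..t₁, ((y^n*z^n/(n.factorial:ℝ)^3) * x ^ n +
        ∑ i ∈ Finset.range n,
          ((2/((n.factorial:ℝ)*((2*n).factorial:ℝ)) * ((-1:ℝ)^(n-i) * ((2*n).choose i)) * (y^(2*n-i)*z^i)) * x ^ n
          + (-(2/((n.factorial:ℝ)*((2*n).factorial:ℝ)) * ((-1:ℝ)^(n-i) * ((2*n).choose i)) * (y^n*z^i))) * x ^ (2*n-i)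
          + (2/((n.factorial:ℝ)*((2*n).factorial:ℝ)) * ((-1:ℝ)^(n-i) * ((2*n).choose i)) * (y^i*z^n)) * x ^ (2*n-i))) := by
    congr 1; funext x; simp only [G]; rw [Finset.mul_sum]
    exact congrArg₂ (· + ·) (by ring) (Finset.sum_congr rfl fun i _ => by ring)
  rw [h, integral_canon]
  simp only [zero_pow (Nat.succ_ne_zero _), sub_zero]
  simp only [F1, Finset.mul_sum]
  exact congrArg₂ (· + ·) (by ring) (Finset.sum_congr rfl fun i hi => by ring)

lemma step2 (n : ℕ) (t₁ t₂ z : ℝ) : (∫ y in t₁..t₂, F1 n t₁ y z) = F2 n t₁ t₂ z := by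
  have h : (∫ y in t₁..t₂, F1 n t₁ y z)
      = ∫ y in t₁..t₂, ((z^n/(n.factorial:ℝ)^3*(t₁^(n+1)/(n+1))) * y ^ n +
        ∑ i ∈ Finset.range n,
          ((2/((n.factorial:ℝ)*((2*n).factorial:ℝ)) * ((-1:ℝ)^(n-i) * ((2*n).choose i)) * (z^i * (t₁^(n+1)/(n+1)))) * y ^ (2*n-i)
          + (-(2/((n.factorial:ℝ)*((2*n).factorial:ℝ)) * ((-1:ℝ)^(n-i) * ((2*n).choose i)) * (z^i * (t₁^(2*n-i+1)/(((2*n-i:ℕ):ℝ)+1))))) * y ^ n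
          + (2/((n.factorial:ℝ)*((2*n).factorial:ℝ)) * ((-1:ℝ)^(n-i) * ((2*n).choose i)) * (z^n * (t₁^(2*n-i+1)/(((2*n-i:ℕ):ℝ)+1)))) * y ^ i)) := by
    congr 1; funext y; simp only [F1]; rw [Finset.mul_sum]
    exact congrArg₂ (· + ·) (by ring) (Finset.sum_congr rfl fun i _ => by ring)
  rw [h, integral_canon]
  simp only [F2, Finset.mul_sum]
  exact congrArg₂ (· + ·) (by ring) (Finset.sum_congr rfl fun i hi => by ring)

lemma step3 (n : ℕ) (t₁ t₂ t₃ : ℝ) : (∫ z in t₂..t₃, F2 n t₁ t₂ z) = F3 n t₁ t₂ t₃ := by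
  have h : (∫ z in t₂..t₃, F2 n t₁ t₂ z)
      = ∫ z in t₂..t₃, (((t₁^(n+1)/(n+1))*((t₂^(n+1)-t₁^(n+1))/(n+1))/(n.factorial:ℝ)^3) * z ^ n +
        ∑ i ∈ Finset.range n,
          ((2/((n.factorial:ℝ)*((2*n).factorial:ℝ)) * ((-1:ℝ)^(n-i) * ((2*n).choose i)) * ((t₁^(n+1)/(n+1))*((t₂^(2*n-i+1)-t₁^(2*n-i+1))/(((2*n-i:ℕ):ℝ)+1)))) * z ^ i
          + (-(2/((n.factorial:ℝ)*((2*n).factorial:ℝ)) * ((-1:ℝ)^(n-i) * ((2*n).choose i)) * ((t₁^(2*n-i+1)/(((2*n-i:ℕ):ℝ)+1))*((t₂^(n+1)-t₁^(n+1))/(n+1))))) * z ^ i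
          + (2/((n.factorial:ℝ)*((2*n).factorial:ℝ)) * ((-1:ℝ)^(n-i) * ((2*n).choose i)) * ((t₁^(2*n-i+1)/(((2*n-i:ℕ):ℝ)+1))*((t₂^(i+1)-t₁^(i+1))/((i:ℝ)+1)))) * z ^ n)) := by
    congr 1; funext z; simp only [F2]; rw [Finset.mul_sum]
    exact congrArg₂ (· + ·) (by ring) (Finset.sum_congr rfl fun i _ => by ring)
  rw [h, integral_canon]
  simp only [F3, Finset.mul_sum]
  exact congrArg₂ (· + ·) (by ring) (Finset.sum_congr rfl fun i hi => by ring)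

lemma choose_id (n i : ℕ) (h : i ≤ 2*n) :
    (2*n).choose i * ((2*n+1) * (2*n+2)) = (2*(n+1)).choose (i+1) * ((2*n-i+1) * (i+1)) := by
  have h1 := Nat.choose_mul_factorial_mul_factorial h
  have h2 := Nat.choose_mul_factorial_mul_factorial (show i+1 ≤ 2*(n+1) by omega)
  have e : 2*(n+1) - (i+1) = 2*n-i+1 := by omega
  rw [e] at h2
  have hpos : 0 < i.factorial * (2*n-i).factorial :=
    Nat.mul_pos (Nat.factorial_pos _) (Nat.factorial_pos _)
  apply Nat.eq_of_mul_eq_mul_right hpos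
  have e2 : (2*(n+1)).factorial = (2*n+2) * ((2*n+1) * (2*n).factorial) := by
    rw [show 2*(n+1) = (2*n+1)+1 by ring, Nat.factorial_succ, Nat.factorial_succ]
  calc (2*n).choose i * ((2*n+1) * (2*n+2)) * (i.factorial * (2*n-i).factorial)
      = ((2*n).choose i * i.factorial * (2*n-i).factorial) * ((2*n+1) * (2*n+2)) := by ring
    _ = (2*n).factorial * ((2*n+1) * (2*n+2)) := by rw [h1]
    _ = (2*(n+1)).factorial := by rw [e2]; ring
    _ = (2*(n+1)).choose (i+1) * (i+1).factorial * (2*n-i+1).factorial := h2.symm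
    _ = (2*(n+1)).choose (i+1) * ((i+1)*i.factorial) * ((2*n-i+1)*(2*n-i).factorial) := by
        rw [Nat.factorial_succ, Nat.factorial_succ]
    _ = (2*(n+1)).choose (i+1) * ((2*n-i+1) * (i+1)) * (i.factorial * (2*n-i).factorial) := by ring

lemma sgn (n i : ℕ) (h : i ≤ n) : (-1:ℝ)^(n-i) = (-1)^n * (-1)^i := by
  have h1 : (-1:ℝ)^(n-i) * (-1)^i = (-1)^n := by
    rw [← pow_add]; congr 1; omega
  have h2 : (-1:ℝ)^i * (-1)^i = 1 := by
    rw [← pow_add, show i+i = 2*i by ring, pow_mul]; norm_num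
  calc (-1:ℝ)^(n-i) = (-1:ℝ)^(n-i) * ((-1)^i * (-1)^i) := by rw [h2, mul_one]
    _ = ((-1:ℝ)^(n-i) * (-1)^i) * (-1)^i := by ring
    _ = (-1)^n * (-1)^i := by rw [h1]

lemma alt1 (M : ℕ) : ∀ k : ℕ, ∑ i ∈ Finset.range k, (-1:ℝ)^i * ((M+1).choose (i+1))
    = 1 - (-1)^k * (M.choose k) := by
  intro k
  induction k with
  | zero => simp
  | succ k ih =>
    rw [Finset.sum_range_succ, ih, Nat.choose_succ_succ]
    push_cast
    ring

lemma halt (n : ℕ) : ∑ i ∈ Finset.range n, (-1:ℝ)^(n-i) * ((2*(n+1)).choose (i+1))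
    = (-1)^n - ((2*n+1).choose n) := by
  have h2 : (-1:ℝ)^n * (-1)^n = 1 := by
    rw [← pow_add, show n+n = 2*n by ring, pow_mul]; norm_num
  calc ∑ i ∈ Finset.range n, (-1:ℝ)^(n-i) * ((2*(n+1)).choose (i+1))
      = ∑ i ∈ Finset.range n, (-1:ℝ)^n * ((-1)^i * (((2*n+1)+1).choose (i+1))) := by
        refine Finset.sum_congr rfl fun i hi => ?_
        rw [sgn n i (le_of_lt (Finset.mem_range.1 hi)), show 2*(n+1) = (2*n+1)+1 by ring]
        ring
    _ = (-1:ℝ)^n * (1 - (-1)^n * ((2*n+1).choose n)) := by rw [← Finset.mul_sum, alt1]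
    _ = (-1:ℝ)^n - ((-1)^n*(-1)^n) * ((2*n+1).choose n) := by ring
    _ = _ := by rw [h2]; ring

lemma fact_cast (k : ℕ) : ((k+1).factorial : ℝ) = ((k:ℝ)+1) * (k.factorial : ℝ) := by
  rw [Nat.factorial_succ]; push_cast; ring

lemma choose_central (n : ℕ) : ((2*n+1).choose n : ℝ)
    = (2*(n:ℝ)+1) * ((2*n).factorial : ℝ) / ((n.factorial : ℝ) * (((n:ℝ)+1) * (n.factorial : ℝ))) := by
  have h := Nat.choose_mul_factorial_mul_factorial (show n ≤ 2*n+1 by omega)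
  have e : 2*n+1-n = n+1 := by omega
  rw [e] at h
  have hc : ((2*n+1).choose n : ℝ) * ((n.factorial:ℝ) * ((n+1).factorial:ℝ))
      = (2*(n:ℝ)+1) * ((2*n).factorial:ℝ) := by
    have := congrArg (Nat.cast : ℕ → ℝ) h
    push_cast at this
    rw [show ((2*n+1).factorial : ℝ) = (2*(n:ℝ)+1) * ((2*n).factorial:ℝ) by
      rw [show 2*n+1 = (2*n)+1 from rfl, fact_cast]; push_cast; ring] at this
    rw [← this]; ring
  rw [fact_cast] at hc
  field_simp
  linarith [hc]

lemma key_term (n i : ℕ) (hi : i < n) (t₁ t₂ t₃ : ℝ) :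
    2 / ((n.factorial:ℝ) * ((2*n).factorial:ℝ)) * ((-1:ℝ)^(n-i) * ((2*n).choose i) *
      ((t₁^(n+1)/((n:ℝ)+1)) * ((t₂^(2*n-i+1) - t₁^(2*n-i+1))/(((2*n-i:ℕ):ℝ)+1)) * ((t₃^(i+1) - t₂^(i+1))/((i:ℝ)+1))
       - (t₁^(2*n-i+1)/(((2*n-i:ℕ):ℝ)+1)) * ((t₂^(n+1) - t₁^(n+1))/((n:ℝ)+1)) * ((t₃^(i+1) - t₂^(i+1))/((i:ℝ)+1))
       + (t₁^(2*n-i+1)/(((2*n-i:ℕ):ℝ)+1)) * ((t₂^(i+1) - t₁^(i+1))/((i:ℝ)+1)) * ((t₃^(n+1) - t₂^(n+1))/((n:ℝ)+1))))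
    = 2 / (((n+1).factorial:ℝ) * ((2*(n+1)).factorial:ℝ)) * ((-1:ℝ)^(n+1-(i+1)) * ((2*(n+1)).choose (i+1)) *
        (t₁^(n+1) * t₂^(2*(n+1)-(i+1)) * t₃^(i+1) - t₁^(2*(n+1)-(i+1)) * t₂^(n+1) * t₃^(i+1)
         + t₁^(2*(n+1)-(i+1)) * t₂^(i+1) * t₃^(n+1)))
      - ((-1:ℝ)^(n-i) * ((2*(n+1)).choose (i+1)))
        * (2 / (((n+1).factorial:ℝ) * ((2*(n+1)).factorial:ℝ))
           * (t₁^(n+1) * t₂^(2*(n+1)) - t₁^(2*(n+1)) * t₂^(n+1) + t₁^(2*(n+1)) * t₃^(n+1))) := by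
  obtain ⟨r, rfl⟩ : ∃ r, n = i + (r+1) := ⟨n-i-1, by omega⟩
  rw [show i+(r+1)+1-(i+1) = r+1 by omega, show i+(r+1)-i = r+1 by omega,
      show 2*(i+(r+1))-i = i+(2*r+2) by omega, show 2*((i+(r+1))+1)-(i+1) = i+(2*r+3) by omega]
  have hfa : ((i+(r+1)+1).factorial : ℝ) = ((i:ℝ)+(r:ℝ)+2) * ((i+(r+1)).factorial : ℝ) := by
    rw [show i+(r+1)+1 = (i+(r+1))+1 from rfl, fact_cast]; push_cast; ring
  have hfb : ((2*(i+(r+1)+1)).factorial : ℝ)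
      = (2*(i:ℝ)+2*r+4) * ((2*(i:ℝ)+2*r+3) * ((2*(i+(r+1))).factorial : ℝ)) := by
    rw [show 2*(i+(r+1)+1) = (2*(i+(r+1))+1)+1 by ring, fact_cast, fact_cast]; push_cast; ring
  have hcc : ((2*(i+(r+1)+1)).choose (i+1) : ℝ)
      = ((2*(i+(r+1))).choose i : ℝ) * ((2*(i:ℝ)+2*r+3) * (2*(i:ℝ)+2*r+4))
        / (((i:ℝ)+2*r+3) * ((i:ℝ)+1)) := by
    have h := choose_id (i+(r+1)) i (by omega)
    rw [show 2*(i+(r+1))-i = i+(2*r+2) by omega] at h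
    have hc := congrArg (Nat.cast : ℕ → ℝ) h
    push_cast at hc
    rw [eq_div_iff (by positivity)]
    linarith [hc]
  rw [hcc, hfa, hfb]
  push_cast
  have h1 : ((i+(r+1)).factorial : ℝ) ≠ 0 := by positivity
  have h2 : ((2*(i+(r+1))).factorial : ℝ) ≠ 0 := by positivity
  field_simp
  ring

lemma final (n : ℕ) (t₁ t₂ t₃ : ℝ) : G (n+1) t₁ t₂ t₃ = F3 n t₁ t₂ t₃ := by
  have hfb : ((2*(n+1)).factorial : ℝ)
      = (2*(n:ℝ)+2) * ((2*(n:ℝ)+1) * ((2*n).factorial : ℝ)) := by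
    rw [show 2*(n+1) = (2*n+1)+1 by ring, fact_cast, fact_cast]; push_cast; ring
  simp only [G, F3]
  conv_rhs => rw [Finset.mul_sum,
    Finset.sum_congr rfl (fun i hi => key_term n i (Finset.mem_range.1 hi) t₁ t₂ t₃),
    Finset.sum_sub_distrib, ← Finset.sum_mul, halt n, ← Finset.mul_sum]
  conv_lhs => rw [Finset.sum_range_succ', mul_add]
  simp only [Nat.sub_zero, Nat.choose_zero_right, Nat.cast_one, pow_zero, mul_one, one_mul]
  rw [choose_central n, fact_cast n, hfb]
  have h1 : ((n.factorial : ℝ)) ≠ 0 := by positivity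
  have h2 : (((2*n).factorial : ℝ)) ≠ 0 := by positivity
  field_simp
  ring

theorem G_integral_recurrence :
    ∀ n : ℕ, 1 ≤ n → ∀ t₁ t₂ t₃ : ℝ, 0 < t₁ → t₁ < t₂ → t₂ < t₃ → t₃ < 1 →
      G (n + 1) t₁ t₂ t₃ =
        ∫ z in t₂..t₃, ∫ y in t₁..t₂, ∫ x in (0:ℝ)..t₁, G n x y z := by
  intro n _ t₁ t₂ t₃ _ _ _ _
  simp only [step1, step2, step3]
  exact final n t₁ t₂ t₃
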